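/- For each i with 1 ≤ i ≤ k, writing the coefficient ξ_i of g(λ) as a polynomial F^{(i)}(ψ_1,...,ψ_i) in the power sums ψ_t = Σ_j n_j^t, the polynomial F^{(i)} depends linearly on ψ_i with a nonzero constant coefficient c_i; i.e., F^{(i)}(y_1,...,y_i) = c_i y_i + G^{(i)}(y_1,...,y_{i-1}) for some nonzero constant c_i. -/

import Mathlib

open Polynomial Finset

/-- The polynomial `g(λ) = ∏ (λ - nᵢ + 2) - Σ nᵢ ∏_{j≠i} (λ - nⱼ + 2)`. -/
noncomputable def gPoly {k : ℕ} (n : Fin k → ℝ) : Polynomial ℝ :=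
  ∏ i, (X - C (n i - 2)) - ∑ i, C (n i) * ∏ j ∈ univ.erase i, (X - C (n j - 2))

namespace XiAux


/-- `f` is representable as a polynomial in the power sums `ψ₁, …, ψ_d`. -/
def Rep (k d : ℕ) (f : (Fin k → ℝ) → ℝ) : Prop :=
  ∃ F : MvPolynomial (Fin d) ℝ, ∀ n : Fin k → ℝ,
    f n = MvPolynomial.eval (fun t : Fin d => ∑ j, n j ^ (t.val + 1)) F

theorem Rep.const (k d : ℕ) (c : ℝ) : Rep k d (fun _ => c) :=
  ⟨MvPolynomial.C c, fun n => by simp⟩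

theorem Rep.add {k d f g} (hf : Rep k d f) (hg : Rep k d g) :
    Rep k d (fun n => f n + g n) := by
  obtain ⟨F, hF⟩ := hf; obtain ⟨G, hG⟩ := hg
  exact ⟨F + G, fun n => by simp [hF n, hG n]⟩

theorem Rep.mul {k d f g} (hf : Rep k d f) (hg : Rep k d g) :
    Rep k d (fun n => f n * g n) := by
  obtain ⟨F, hF⟩ := hf; obtain ⟨G, hG⟩ := hg
  exact ⟨F * G, fun n => by simp [hF n, hG n]⟩

theorem Rep.smul {k d f} (c : ℝ) (hf : Rep k d f) :
    Rep k d (fun n => c * f n) := (Rep.const k d c).mul hf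

theorem Rep.finsum {k d : ℕ} {ι : Type*} (s : Finset ι) (f : ι → (Fin k → ℝ) → ℝ)
    (hf : ∀ a ∈ s, Rep k d (f a)) : Rep k d (fun n => ∑ a ∈ s, f a n) := by
  classical
  induction s using Finset.induction_on with
  | empty => simpa using Rep.const k d 0
  | @insert a s hx ih =>
    simp only [Finset.sum_insert hx]
    exact (hf a (by simp)).add (ih fun b hb => hf b (by simp [hb]))

theorem Rep.mono {k d d' f} (h : d ≤ d') (hf : Rep k d f) : Rep k d' f := by
  obtain ⟨F, hF⟩ := hf
  refine ⟨MvPolynomial.rename (Fin.castLE h) F, fun n => ?_⟩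
  rw [MvPolynomial.eval_rename]
  exact hF n

theorem Rep.psi {k d s : ℕ} (h1 : 1 ≤ s) (h2 : s ≤ d) :
    Rep k d (fun n => ∑ j, n j ^ s) :=
  ⟨MvPolynomial.X ⟨s - 1, by omega⟩, fun n => by
    simp [Nat.sub_add_cancel h1]⟩

theorem shifted_pow_expand (k t : ℕ) (n : Fin k → ℝ) :
    (∑ j, (n j - 2) ^ t) =
      ∑ s ∈ range (t + 1), ((t.choose s : ℝ) * (-2) ^ (t - s)) * (∑ j, n j ^ s) := by
  simp_rw [Finset.mul_sum]
  rw [Finset.sum_comm]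
  refine Finset.sum_congr rfl fun j _ => ?_
  have : n j - 2 = n j + (-2) := by ring
  rw [this, add_pow]
  exact Finset.sum_congr rfl fun s _ => by ring

/-- The shifted power sum minus its top power sum is representable below. -/
theorem repP (k t : ℕ) (ht : 1 ≤ t) :
    Rep k (t - 1) (fun n => (∑ j, (n j - 2) ^ t) - ∑ j, n j ^ t) := by
  have h : ∀ n : Fin k → ℝ,
      (∑ j, (n j - 2) ^ t) - (∑ j, n j ^ t) =
        ∑ s ∈ range t, ((t.choose s : ℝ) * (-2) ^ (t - s)) * (∑ j, n j ^ s) := by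
    intro n
    rw [shifted_pow_expand, Finset.sum_range_succ]
    simp
  have : Rep k (t - 1)
      (fun n => ∑ s ∈ range t, ((t.choose s : ℝ) * (-2) ^ (t - s)) * (∑ j, n j ^ s)) := by
    refine Rep.finsum _ _ fun s hs => ?_
    rcases Nat.eq_zero_or_pos s with hs0 | hs1
    · subst hs0
      have : (fun n : Fin k → ℝ => ((t.choose 0 : ℝ) * (-2) ^ (t - 0)) * (∑ j, n j ^ 0))
          = fun _ => ((t.choose 0 : ℝ) * (-2) ^ (t - 0)) * k := by
        funext n; simp
      rw [this]; exact Rep.const _ _ _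
    · exact Rep.smul _ (Rep.psi hs1 (by simp at hs; omega))
  obtain ⟨F, hF⟩ := this
  exact ⟨F, fun n => by simp only []; rw [h n]; exact hF n⟩


noncomputable def Ee (k d : ℕ) (n : Fin k → ℝ) : ℝ :=
  MvPolynomial.eval (fun j => n j - 2) (MvPolynomial.esymm (Fin k) ℝ d)

theorem Ee_zero (k : ℕ) (n : Fin k → ℝ) : Ee k 0 n = 1 := by
  simp [Ee, MvPolynomial.esymm_zero]

theorem newton (k d : ℕ) (n : Fin k → ℝ) :
    (d : ℝ) * Ee k d n = (-1) ^ (d + 1) *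
      ∑ a ∈ antidiagonal d with a.1 < d,
        (-1) ^ a.1 * Ee k a.1 n * (∑ j, (n j - 2) ^ a.2) := by
  have h := congrArg (MvPolynomial.eval (fun j : Fin k => n j - 2))
    (MvPolynomial.mul_esymm_eq_sum (Fin k) ℝ d)
  simpa [Ee, MvPolynomial.psum, map_sum] using h

theorem newton_sum (k d : ℕ) (n : Fin k → ℝ) :
    (∑ a ∈ antidiagonal d with a.1 < d,
        ((-1:ℝ)) ^ a.1 * Ee k a.1 n * (∑ j, (n j - 2) ^ a.2))
      = ∑ a ∈ range d, (-1:ℝ) ^ a * Ee k a n * (∑ j, (n j - 2) ^ (d - a)) := by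
  refine Finset.sum_nbij' (fun a => a.1) (fun a => (a, d - a)) ?_ ?_ ?_ ?_ ?_
  · intro a ha
    simp only [mem_filter, Finset.mem_antidiagonal] at ha
    simp [ha.2]
  · intro a ha
    simp only [mem_range] at ha
    simp only [mem_filter, Finset.HasAntidiagonal.mem_antidiagonal]
    omega
  · intro a ha
    simp only [mem_filter, Finset.HasAntidiagonal.mem_antidiagonal] at ha
    ext <;> simp <;> omega
  · intro a ha; rfl
  · intro a ha
    simp only [mem_filter, Finset.HasAntidiagonal.mem_antidiagonal] at ha
    have : a.2 = d - a.1 := by omega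
    rw [this]

theorem Rep.congr {k d : ℕ} {f g : (Fin k → ℝ) → ℝ} (h : ∀ n, f n = g n)
    (hf : Rep k d f) : Rep k d g := by
  obtain ⟨F, hF⟩ := hf
  exact ⟨F, fun n => (h n).symm.trans (hF n)⟩

theorem repE_aux (k d : ℕ) (ih : ∀ t, t ≤ d → Rep k t (Ee k t)) :
    Rep k d (fun n => Ee k (d + 1) n - ((-1:ℝ) ^ d / (d + 1)) * ∑ j, n j ^ (d + 1)) := by
  have key : ∀ n : Fin k → ℝ,
      Ee k (d + 1) n - ((-1:ℝ) ^ d / (d + 1)) * (∑ j, n j ^ (d + 1)) =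
      ((-1:ℝ) ^ d / (d + 1)) *
        (((∑ j, (n j - 2) ^ (d + 1)) - ∑ j, n j ^ (d + 1))
          + ∑ a ∈ range d, (-1:ℝ) ^ (a + 1) * Ee k (a + 1) n * (∑ j, (n j - 2) ^ (d - a))) := by
    intro n
    have h1 := newton k (d + 1) n
    rw [newton_sum, Finset.sum_range_succ'] at h1
    simp only [Ee_zero, Nat.add_sub_cancel, pow_zero, one_mul, mul_one] at h1
    have hd1 : ((d : ℝ) + 1) ≠ 0 := by positivity
    push_cast at h1
    field_simp
    linear_combination h1
  refine Rep.congr (fun n => (key n).symm) (Rep.smul _ (Rep.add ?_ ?_))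
  · exact (repP k (d + 1) (by omega)).mono (by omega)
  · refine Rep.finsum _ _ fun a ha => ?_
    simp only [mem_range] at ha
    refine Rep.congr (f := fun n => ((-1:ℝ) ^ (a + 1)) * (Ee k (a + 1) n * (∑ j, (n j - 2) ^ (d - a)))) (fun n => by ring) ?_
    refine Rep.smul _ (Rep.mul (Rep.mono (show a + 1 ≤ d by omega) (ih (a + 1) (by omega))) ?_)
    have h2 : 1 ≤ d - a := by omega
    refine Rep.congr (f := fun n => ((∑ j, (n j - 2) ^ (d - a)) - ∑ j, n j ^ (d - a)) + ∑ j, n j ^ (d - a)) (fun n => by ring) ?_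
    exact Rep.add (Rep.mono (show d - a - 1 ≤ d by omega) (repP k (d - a) h2)) (Rep.psi h2 (by omega))

theorem repE (k : ℕ) : ∀ d, Rep k d (Ee k d) := by
  intro d
  induction d using Nat.strong_induction_on with
  | _ d ih =>
    match d with
    | 0 => exact ⟨1, fun n => by simp [Ee_zero]⟩
    | d + 1 =>
      have h := repE_aux k d (fun t ht => ih t (by omega))
      refine Rep.congr (f := fun n =>
        (Ee k (d + 1) n - ((-1:ℝ) ^ d / (d + 1)) * ∑ j, n j ^ (d + 1))
          + ((-1:ℝ) ^ d / (d + 1)) * ∑ j, n j ^ (d + 1)) (fun n => by ring) ?_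
      exact (h.mono (by omega)).add (Rep.smul _ (Rep.psi (by omega) (by omega)))



theorem gPoly_eq (k : ℕ) (n : Fin k → ℝ) :
    gPoly n = ((k : ℝ) + 1) • (∏ i, (X - C (n i - 2)))
      - (X + C 2) * derivative (∏ i, (X - C (n i - 2))) := by
  set P : Polynomial ℝ := ∏ i, (X - C (n i - 2)) with hP
  have hder : derivative P = ∑ i, ∏ j ∈ univ.erase i, (X - C (n j - 2)) := by
    rw [hP, Finset.prod_eq_multiset_prod, derivative_prod, Finset.sum_eq_multiset_sum]
    refine congrArg Multiset.sum (Multiset.map_congr rfl fun i hi => ?_)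
    rw [derivative_sub, derivative_X, derivative_C, sub_zero, mul_one,
      Finset.prod_eq_multiset_prod, Finset.erase_val]
  have hterm : ∀ i : Fin k, C (n i) * ∏ j ∈ univ.erase i, (X - C (n j - 2))
      = (X + C 2) * ∏ j ∈ univ.erase i, (X - C (n j - 2)) - P := by
    intro i
    have h := (Finset.mul_prod_erase univ (fun j => X - C (n j - 2)) (mem_univ i)).symm
    rw [hP, h]
    have : C (n i) = C (n i - 2) + C 2 := by rw [← C_add]; norm_num
    rw [this]
    ring
  have hsum : ∑ i, C (n i) * ∏ j ∈ univ.erase i, (X - C (n j - 2))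
      = (X + C 2) * derivative P - (k : ℝ) • P := by
    rw [Finset.sum_congr rfl fun i _ => hterm i, Finset.sum_sub_distrib, ← Finset.mul_sum,
      ← hder]
    simp [card_univ, ← Nat.cast_smul_eq_nsmul ℝ]
  rw [gPoly, hsum]
  rw [show ((k : ℝ) + 1) • P = (k : ℝ) • P + P by rw [add_smul, one_smul]]
  ring



theorem Ee_eq_multiset (k d : ℕ) (n : Fin k → ℝ) :
    Ee k d n = ((univ.val : Multiset (Fin k)).map (fun j => n j - 2)).esymm d := by
  rw [Finset.esymm_map_val, Ee, MvPolynomial.esymm, map_sum]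
  exact Finset.sum_congr rfl fun t _ => by rw [map_prod]; simp

theorem coeff_prod (k d : ℕ) (hd : d ≤ k) (n : Fin k → ℝ) :
    (∏ j, (X - C (n j - 2))).coeff (k - d) = (-1 : ℝ) ^ d * Ee k d n := by
  have h1 : (∏ j, (X - C (n j - 2)) : Polynomial ℝ)
      = (Multiset.map (fun t => X - C t)
          ((univ.val : Multiset (Fin k)).map fun j => n j - 2)).prod := by
    rw [Multiset.map_map, Finset.prod_eq_multiset_prod]; rfl
  have hcard : Multiset.card ((univ.val : Multiset (Fin k)).map fun j => n j - 2) = k := by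
    simp
  rw [h1, Multiset.prod_X_sub_C_coeff _ (by rw [hcard]; omega), hcard,
    Nat.sub_sub_self hd, Ee_eq_multiset]

theorem coeff_gPoly (k m : ℕ) (hik : m + 1 ≤ k) (n : Fin k → ℝ) :
    (gPoly n).coeff (k - (m + 1)) = ((m : ℝ) + 2) * ((-1) ^ (m + 1) * Ee k (m + 1) n)
      + 2 * ((k : ℝ) - m) * ((-1) ^ (m + 1) * Ee k m n) := by
  set i := m + 1 with hi
  set P : Polynomial ℝ := ∏ j, (X - C (n j - 2)) with hP
  have hcast : ((k - i : ℕ) : ℝ) = (k : ℝ) - i := by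
    push_cast [Nat.cast_sub hik]; ring
  have hx : (X * derivative P).coeff (k - i) = ((k : ℝ) - i) * P.coeff (k - i) := by
    rcases Nat.eq_zero_or_pos (k - i) with h0 | hpos
    · have hki : (k : ℝ) - i = 0 := by rw [← hcast, h0]; simp
      rw [h0, Polynomial.mul_coeff_zero, coeff_X_zero, zero_mul, hki, zero_mul]
    · have hm : k - i = (k - i - 1) + 1 := by omega
      rw [hm, coeff_X_mul, coeff_derivative]
      have h1 : ((k - i - 1 : ℕ) : ℝ) + 1 = (k : ℝ) - i := by
        have h2 : (k - i - 1) + 1 = k - i := by omega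
        calc ((k - i - 1 : ℕ) : ℝ) + 1 = (((k - i - 1) + 1 : ℕ) : ℝ) := by push_cast; ring
          _ = ((k - i : ℕ) : ℝ) := by rw [h2]
          _ = (k : ℝ) - i := hcast
      rw [h1, ← hm]
      ring
  have hcoeff1 : P.coeff (k - i) = (-1 : ℝ) ^ i * Ee k i n := coeff_prod k i hik n
  have hcoeff2 : P.coeff (k - i + 1) = (-1 : ℝ) ^ m * Ee k m n := by
    have h3 : k - i + 1 = k - m := by omega
    rw [h3]
    exact coeff_prod k m (by omega) n
  have hder : (derivative P).coeff (k - i) = P.coeff (k - i + 1) * ((k - i : ℕ) + 1) :=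
    coeff_derivative P (k - i)
  have hxc : ((X + C 2) * derivative P).coeff (k - i)
      = ((k : ℝ) - i) * P.coeff (k - i) + 2 * ((derivative P).coeff (k - i)) := by
    rw [add_mul, coeff_add, coeff_C_mul, hx]
  rw [gPoly_eq, ← hP, coeff_sub, coeff_smul, hxc, hder, hcoeff1, hcoeff2, hcast, smul_eq_mul]
  have hcast2 : (i : ℝ) = (m : ℝ) + 1 := by rw [hi]; push_cast; ring
  rw [hcast2, hi]
  ring


end XiAux



/-- Writing `ξ_i` as a polynomial in the power sums `ψ₁, …, ψ_i`, it is linear in `ψ_i`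
with a nonzero constant coefficient: `ξ_i = c_i ψ_i + G(ψ₁, …, ψ_{i-1})`. -/
theorem xi_linear_in_top_psum (k i : ℕ) (hi : 1 ≤ i) (hik : i ≤ k) :
    ∃ c : ℝ, c ≠ 0 ∧ ∃ G : MvPolynomial (Fin (i - 1)) ℝ, ∀ n : Fin k → ℝ,
      (gPoly n).coeff (k - i) =
        c * (∑ j, n j ^ i) +
          MvPolynomial.eval (fun t : Fin (i - 1) => ∑ j, n j ^ (t.val + 1)) G := by
  obtain ⟨m, rfl⟩ : ∃ m, i = m + 1 := ⟨i - 1, by omega⟩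
  obtain ⟨G1, hG1⟩ := XiAux.repE_aux k m (fun t _ => XiAux.repE k t)
  obtain ⟨G2, hG2⟩ := XiAux.repE k m
  refine ⟨((m : ℝ) + 2) * (-1) ^ (m + 1) * ((-1) ^ m / ((m : ℝ) + 1)), ?_, ?_⟩
  · refine mul_ne_zero (mul_ne_zero (by positivity) (pow_ne_zero _ (by norm_num)))
      (div_ne_zero (pow_ne_zero _ (by norm_num)) (by positivity))
  · refine ⟨MvPolynomial.C (((m : ℝ) + 2) * (-1) ^ (m + 1)) * G1
      + MvPolynomial.C (2 * ((k : ℝ) - m) * (-1) ^ (m + 1)) * G2, fun n => ?_⟩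
    show (gPoly n).coeff (k - (m + 1)) =
      ((m : ℝ) + 2) * (-1) ^ (m + 1) * ((-1) ^ m / ((m : ℝ) + 1)) * (∑ j, n j ^ (m + 1)) +
        MvPolynomial.eval (fun t : Fin m => ∑ j, n j ^ (t.val + 1))
          (MvPolynomial.C (((m : ℝ) + 2) * (-1) ^ (m + 1)) * G1
            + MvPolynomial.C (2 * ((k : ℝ) - m) * (-1) ^ (m + 1)) * G2)
    rw [XiAux.coeff_gPoly k m hik n]
    simp only [map_add, map_mul, MvPolynomial.eval_C]
    have e1 := hG1 n
    have e2 := hG2 n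
    simp only [] at e1 e2
    linear_combination (((m : ℝ) + 2) * (-1) ^ (m + 1)) * e1
      + (2 * ((k : ℝ) - m) * (-1) ^ (m + 1)) * e2
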